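/- Let ι be a countable type, c : ι → ℝ^d an injective map, and p : ι → ℝ a probability mass function (p ≥ 0 with ∑_z p(z) = 1). Fix t > 0 and define the posterior weights w_t(z′ | x) := p(z′) φ_t(x − c(z′)) / ∑_u p(u) φ_t(x − c(u)) (for x with positive denominator) and the kernel q_{t,z}(z′) := ∫_{ℝ^d} w_t(z′ | x) φ_t(x − c(z)) dx. Then for any indices z ≠ z′ with p(z) > 0, q_{t,z}(z′) ≤ (1/2) √( p(z′)/p(z) ) · exp( −‖c(z′) − c(z)‖² / (8t) ). -/

import Mathlib

open MeasureTheory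

/-- Density of the centered Gaussian `N(0, t I_d)` on `ℝ^d`. -/
noncomputable def gaussDensity (d : ℕ) (t : ℝ) (x : EuclideanSpace ℝ (Fin d)) : ℝ :=
  (2 * Real.pi * t) ^ (-(d : ℝ) / 2) * Real.exp (-‖x‖ ^ 2 / (2 * t))

/-- Posterior weight `w_t(z′ | x) = p(z′) φ_t(x − c(z′)) / ∑_u p(u) φ_t(x − c(u))`. -/
noncomputable def postWeight {ι : Type*} (d : ℕ) (t : ℝ) (p : ι → ℝ)
    (c : ι → EuclideanSpace ℝ (Fin d)) (z' : ι) (x : EuclideanSpace ℝ (Fin d)) : ℝ :=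
  p z' * gaussDensity d t (x - c z') / ∑' u, p u * gaussDensity d t (x - c u)

/-- Kernel `q_{t,z}(z′) = ∫ w_t(z′ | x) φ_t(x − c(z)) dx`. -/
noncomputable def postKernel {ι : Type*} (d : ℕ) (t : ℝ) (p : ι → ℝ)
    (c : ι → EuclideanSpace ℝ (Fin d)) (z z' : ι) : ℝ :=
  ∫ x, postWeight d t p c z' x * gaussDensity d t (x - c z)


section Aux
open Real
variable {d : ℕ} {t : ℝ}

lemma gaussDensity_nonneg (ht : 0 < t) (x : EuclideanSpace ℝ (Fin d)) :
    0 ≤ gaussDensity d t x := by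
  unfold gaussDensity; positivity

lemma gaussDensity_pos (ht : 0 < t) (x : EuclideanSpace ℝ (Fin d)) :
    0 < gaussDensity d t x := by
  unfold gaussDensity
  have : 0 < 2 * Real.pi * t := by positivity
  positivity

lemma gaussDensity_le (ht : 0 < t) (x : EuclideanSpace ℝ (Fin d)) :
    gaussDensity d t x ≤ (2 * Real.pi * t) ^ (-(d : ℝ) / 2) := by
  unfold gaussDensity
  have h : Real.exp (-‖x‖ ^ 2 / (2 * t)) ≤ 1 := by
    rw [Real.exp_le_one_iff]
    have : (0:ℝ) ≤ ‖x‖^2 := by positivity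
    have h2 : 0 < 2*t := by linarith
    rw [div_nonpos_iff]; right; constructor <;> [linarith; linarith]
  have hA : (0:ℝ) ≤ (2 * Real.pi * t) ^ (-(d : ℝ) / 2) := by positivity
  calc _ ≤ (2 * Real.pi * t) ^ (-(d : ℝ) / 2) * 1 := by
        apply mul_le_mul_of_nonneg_left h hA
    _ = _ := mul_one _

lemma integrable_gaussDensity (ht : 0 < t) (m : EuclideanSpace ℝ (Fin d)) :
    Integrable (fun x : EuclideanSpace ℝ (Fin d) => gaussDensity d t (x - m)) := by
  have hb : (0:ℝ) < 1 / (2*t) := by positivity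
  have h0 : Integrable (fun x : EuclideanSpace ℝ (Fin d) => Real.exp (-(1/(2*t)) * ‖x‖^2)) := by
    have := (GaussianFourier.integrable_cexp_neg_mul_sq_norm_add
      (b := ((1/(2*t) : ℝ) : ℂ)) (by simpa using hb) 0 (0 : EuclideanSpace ℝ (Fin d))).norm
    convert this using 2 with x
    rw [Complex.norm_exp]
    congr 1
    simp [← Complex.ofReal_pow]
  have h1 : Integrable (fun x : EuclideanSpace ℝ (Fin d) => gaussDensity d t x) := by
    unfold gaussDensity
    apply Integrable.const_mul
    convert h0 using 2 with x
    ring_nf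
  exact h1.comp_sub_right m

lemma integral_gaussDensity (ht : 0 < t) (m : EuclideanSpace ℝ (Fin d)) :
    ∫ x : EuclideanSpace ℝ (Fin d), gaussDensity d t (x - m) = 1 := by
  rw [integral_sub_right_eq_self (fun x => gaussDensity d t x) m]
  unfold gaussDensity
  rw [integral_const_mul]
  have hb : (0:ℝ) < 1 / (2*t) := by positivity
  have h := GaussianFourier.integral_rexp_neg_mul_sq_norm (V := EuclideanSpace ℝ (Fin d)) hb
  rw [show (fun x : EuclideanSpace ℝ (Fin d) => Real.exp (-‖x‖^2 / (2*t)))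
      = fun x => Real.exp (-(1/(2*t)) * ‖x‖^2) from funext fun x => by ring_nf] at *
  rw [h]
  have hfr : (Module.finrank ℝ (EuclideanSpace ℝ (Fin d)) : ℝ) = d := by
    simp [finrank_euclideanSpace_fin]
  rw [hfr]
  have hpos : (0:ℝ) < 2 * Real.pi * t := by positivity
  rw [show Real.pi / (1/(2*t)) = 2 * Real.pi * t by field_simp]
  rw [← Real.rpow_add hpos, show -(d:ℝ)/2 + (d:ℝ)/2 = 0 by ring, Real.rpow_zero]

lemma amgm_div {a b : ℝ} (ha : 0 ≤ a) (hb : 0 ≤ b) :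
    a * b / (a + b) ≤ Real.sqrt (a * b) / 2 := by
  rcases eq_or_lt_of_le (add_nonneg ha hb) with h | h
  · rw [← h, div_zero]; positivity
  · rw [div_le_div_iff₀ h (by norm_num), Real.sqrt_mul ha b]
    nlinarith [Real.sq_sqrt ha, Real.sq_sqrt hb, Real.sqrt_nonneg a, Real.sqrt_nonneg b,
      mul_nonneg (mul_nonneg (Real.sqrt_nonneg a) (Real.sqrt_nonneg b))
        (sq_nonneg (Real.sqrt a - Real.sqrt b))]

lemma sqrt_gauss_mul (ht : 0 < t) (a b x : EuclideanSpace ℝ (Fin d)) :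
    Real.sqrt (gaussDensity d t (x - a) * gaussDensity d t (x - b))
      = Real.exp (-‖a - b‖ ^ 2 / (8 * t)) * gaussDensity d t (x - (2:ℝ)⁻¹ • (a + b)) := by
  have hpar := parallelogram_law_with_norm ℝ (x - a) (x - b)
  have h1 : x - a + (x - b) = (2:ℝ) • (x - (2:ℝ)⁻¹ • (a+b)) := by module
  have h2 : x - a - (x - b) = b - a := by abel
  rw [h1, h2, norm_smul, norm_sub_rev b a] at hpar
  simp only [Real.norm_ofNat] at hpar
  have hA : (0:ℝ) < (2 * Real.pi * t) ^ (-(d:ℝ)/2) := by positivity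
  have e1 : gaussDensity d t (x - a) * gaussDensity d t (x - b)
      = ((2 * Real.pi * t) ^ (-(d:ℝ)/2) * (2 * Real.pi * t) ^ (-(d:ℝ)/2))
        * Real.exp (-‖x - a‖ ^ 2 / (2 * t) + -‖x - b‖ ^ 2 / (2 * t)) := by
    unfold gaussDensity; rw [Real.exp_add]; ring
  rw [e1, Real.sqrt_mul (by positivity), Real.sqrt_mul_self hA.le, ← Real.exp_half]
  unfold gaussDensity
  rw [show Real.exp (-‖a - b‖ ^ 2 / (8 * t)) * ((2 * Real.pi * t) ^ (-(d:ℝ)/2)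
      * Real.exp (-‖x - (2:ℝ)⁻¹ • (a + b)‖ ^ 2 / (2 * t)))
      = (2 * Real.pi * t) ^ (-(d:ℝ)/2) * Real.exp (-‖a - b‖ ^ 2 / (8 * t)
        + -‖x - (2:ℝ)⁻¹ • (a + b)‖ ^ 2 / (2 * t)) by rw [Real.exp_add]; ring]
  congr 1
  have hn : ‖x - a‖^2 + ‖x - b‖^2
      = ‖a - b‖^2/2 + 2 * ‖x - (2:ℝ)⁻¹ • (a + b)‖^2 := by nlinarith [hpar]
  have ht' : t ≠ 0 := ne_of_gt ht
  set n1 := ‖x - a‖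
  set n2 := ‖x - b‖
  set nd := ‖a - b‖
  set nm := ‖x - (2:ℝ)⁻¹ • (a + b)‖
  congr 1
  field_simp
  linear_combination (-8) * hn


end Aux

/-- For `z ≠ z′` with `p(z) > 0`,
`q_{t,z}(z′) ≤ (1/2) √(p(z′)/p(z)) exp(−‖c(z′) − c(z)‖²/(8t))`. -/
theorem postKernel_le_hellinger_bound
    {ι : Type*} [Countable ι] {d : ℕ} (c : ι → EuclideanSpace ℝ (Fin d))
    (hc : Function.Injective c) (p : ι → ℝ) (hp : ∀ z, 0 ≤ p z) (hp1 : ∑' z, p z = 1)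
    (t : ℝ) (ht : 0 < t) (z z' : ι) (hne : z ≠ z') (hpz : 0 < p z) :
    postKernel d t p c z z'
      ≤ (1 / 2) * Real.sqrt (p z' / p z) * Real.exp (-‖c z' - c z‖ ^ 2 / (8 * t)) := by
  classical
  set m : EuclideanSpace ℝ (Fin d) := (2:ℝ)⁻¹ • (c z' + c z) with hm
  set C : ℝ := (1 / 2) * Real.sqrt (p z' / p z) * Real.exp (-‖c z' - c z‖ ^ 2 / (8 * t)) with hC
  have hC0 : 0 ≤ C := by positivity
  have hP : Summable p := by
    by_contra h
    rw [tsum_eq_zero_of_not_summable h] at hp1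
    norm_num at hp1
  have hsum : ∀ x : EuclideanSpace ℝ (Fin d),
      Summable (fun u => p u * gaussDensity d t (x - c u)) := by
    intro x
    apply Summable.of_nonneg_of_le
      (fun u => mul_nonneg (hp u) (gaussDensity_nonneg ht _))
      (fun u => mul_le_mul_of_nonneg_left (gaussDensity_le ht _) (hp u))
      (hP.mul_right _)
  -- pointwise bound
  have key : ∀ x : EuclideanSpace ℝ (Fin d),
      postWeight d t p c z' x * gaussDensity d t (x - c z)
        ≤ C * gaussDensity d t (x - m) := by
    intro x
    set gz := gaussDensity d t (x - c z) with hgz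
    set gz' := gaussDensity d t (x - c z') with hgz'
    have hgz0 : 0 < gz := gaussDensity_pos ht _
    have hgz'0 : 0 ≤ gz' := gaussDensity_nonneg ht _
    set a := p z * gz with ha
    set b := p z' * gz' with hb
    have ha0 : 0 < a := mul_pos hpz hgz0
    have hb0 : 0 ≤ b := mul_nonneg (hp z') hgz'0
    have hab0 : 0 < a + b := by linarith
    have hS1 : a + b ≤ ∑' u, p u * gaussDensity d t (x - c u) := by
      have := Summable.sum_le_tsum ({z, z'} : Finset ι)
        (fun u _ => mul_nonneg (hp u) (gaussDensity_nonneg ht _)) (hsum x)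
      rwa [Finset.sum_pair hne] at this
    have hS0 : 0 < ∑' u, p u * gaussDensity d t (x - c u) := lt_of_lt_of_le hab0 hS1
    have hdiv : Real.sqrt (p z * p z') / p z = Real.sqrt (p z' / p z) := by
      rw [show p z' / p z = (p z * p z') / (p z)^2 by field_simp,
        Real.sqrt_div (mul_nonneg hpz.le (hp z')), Real.sqrt_sq hpz.le]
    calc postWeight d t p c z' x * gz
        = b / (∑' u, p u * gaussDensity d t (x - c u)) * gz := rfl
      _ ≤ b / (a + b) * gz := by
          apply mul_le_mul_of_nonneg_right _ hgz0.le
          exact div_le_div_of_nonneg_left hb0 hab0 hS1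
      _ = (a * b / (a + b)) / p z := by
          rw [ha]; field_simp
      _ ≤ (Real.sqrt (a * b) / 2) / p z :=
          (div_le_div_iff_of_pos_right hpz).mpr (amgm_div ha0.le hb0)
      _ = (1/2) * (Real.sqrt (p z * p z') / p z) * Real.sqrt (gz' * gz) := by
          rw [show a * b = (p z * p z') * (gz' * gz) by rw [ha, hb]; ring,
            Real.sqrt_mul (mul_nonneg hpz.le (hp z'))]
          ring
      _ = (1/2) * Real.sqrt (p z' / p z) * Real.sqrt (gz' * gz) := by rw [hdiv]
      _ = C * gaussDensity d t (x - m) := by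
          rw [hgz', hgz, sqrt_gauss_mul ht (c z') (c z) x, hC, hm]
          ring
  have hnonneg : ∀ x : EuclideanSpace ℝ (Fin d),
      0 ≤ postWeight d t p c z' x * gaussDensity d t (x - c z) := by
    intro x
    apply mul_nonneg _ (gaussDensity_nonneg ht _)
    apply div_nonneg (mul_nonneg (hp z') (gaussDensity_nonneg ht _))
    exact tsum_nonneg fun u => mul_nonneg (hp u) (gaussDensity_nonneg ht _)
  have hgi : Integrable (fun x : EuclideanSpace ℝ (Fin d) => C * gaussDensity d t (x - m)) :=
    (integrable_gaussDensity ht m).const_mul C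
  calc postKernel d t p c z z'
      ≤ ∫ x : EuclideanSpace ℝ (Fin d), C * gaussDensity d t (x - m) :=
        integral_mono_of_nonneg (Filter.Eventually.of_forall hnonneg) hgi
          (Filter.Eventually.of_forall key)
    _ = C * ∫ x : EuclideanSpace ℝ (Fin d), gaussDensity d t (x - m) := integral_const_mul C _
    _ = C := by rw [integral_gaussDensity ht m, mul_one]
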